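/- arXiv:2001.00013 — 9 statements merged into one kernel-verified Lean document; each statement's English description precedes it below -/
import Mathlib

section
/- For all real θ, μ1, μ2 and all real r1, r2, one has 1 + r1² + r2² + 2·r1·cos(θ−μ1) + 2·r2·cos(θ−μ2) + 2·r1·r2·cos(2θ−μ1−μ2) = |1 + r1·e^{i(θ−μ1)} + r2·e^{−i(θ−μ2)}|², where the right-hand side is the squared modulus of a complex number; in particular the left-hand side is nonnegative, so the quadratic cardioid density f is nonnegative. -/
open Real Complex

/-- The quadratic cardioid numerator equals a squared complex modulus, and is
hence nonnegative. -/
theorem quadratic_cardioid_numerator_eq_sq_abs (θ μ1 μ2 r1 r2 : ℝ) :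
    1 + r1 ^ 2 + r2 ^ 2 + 2 * r1 * Real.cos (θ - μ1) + 2 * r2 * Real.cos (θ - μ2)
        + 2 * r1 * r2 * Real.cos (2 * θ - μ1 - μ2)
      = ‖(1 + (r1 : ℂ) * Complex.exp (Complex.I * ((θ : ℂ) - (μ1 : ℂ)))
          + (r2 : ℂ) * Complex.exp (-Complex.I * ((θ : ℂ) - (μ2 : ℂ))))‖ ^ 2
    ∧ 0 ≤ 1 + r1 ^ 2 + r2 ^ 2 + 2 * r1 * Real.cos (θ - μ1) + 2 * r2 * Real.cos (θ - μ2)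
        + 2 * r1 * r2 * Real.cos (2 * θ - μ1 - μ2) := by
  have h1 : Complex.I * ((θ : ℂ) - (μ1 : ℂ)) = ((θ - μ1 : ℝ) : ℂ) * Complex.I := by
    push_cast; ring
  have h2 : -Complex.I * ((θ : ℂ) - (μ2 : ℂ)) = ((-(θ - μ2) : ℝ) : ℂ) * Complex.I := by
    push_cast; ring
  have hc : (2 : ℝ) * θ - μ1 - μ2 = (θ - μ1) + (θ - μ2) := by ring
  have key : 1 + r1 ^ 2 + r2 ^ 2 + 2 * r1 * Real.cos (θ - μ1) + 2 * r2 * Real.cos (θ - μ2)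
        + 2 * r1 * r2 * Real.cos (2 * θ - μ1 - μ2)
      = ‖(1 + (r1 : ℂ) * Complex.exp (Complex.I * ((θ : ℂ) - (μ1 : ℂ)))
          + (r2 : ℂ) * Complex.exp (-Complex.I * ((θ : ℂ) - (μ2 : ℂ))))‖ ^ 2 := by
    rw [h1, h2, hc, Complex.sq_norm, Complex.exp_mul_I, Complex.exp_mul_I, Real.cos_add]
    simp only [Complex.normSq_apply, ← Complex.ofReal_sub, ← Complex.ofReal_neg,
      Complex.add_re, Complex.add_im, Complex.mul_re, Complex.mul_im, Complex.one_re,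
      Complex.one_im, Complex.I_re, Complex.I_im, Complex.ofReal_re, Complex.ofReal_im,
      Complex.cos_ofReal_re, Complex.sin_ofReal_re, Complex.cos_ofReal_im,
      Complex.sin_ofReal_im, Real.cos_neg, Real.sin_neg]
    nlinarith [Real.sin_sq_add_cos_sq (θ - μ1), Real.sin_sq_add_cos_sq (θ - μ2)]
  refine ⟨key, ?_⟩
  rw [key]
  positivity
end

section
/- For the quadratic cardioid density f with parameters μ1, μ2 ∈ ℝ and r1, r2 ≥ 0, the first trigonometric moment is ∫₀^{2π} e^{iθ} f(θ) dθ = (2π/I)·(r1·e^{iμ1} + r2·e^{iμ2}), where I = 2π(1 + r1² + r2²). -/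
open Real

lemma exp_int_integral (n : ℤ) (hn : n ≠ 0) :
    ∫ θ in (0:ℝ)..(2*π), Complex.exp ((n : ℂ) * Complex.I * θ) = 0 := by
  rw [integral_exp_mul_complex (mul_ne_zero (by exact_mod_cast hn) Complex.I_ne_zero)]
  rw [show ((n:ℂ) * Complex.I * ((2*π:ℝ):ℂ)) = (n:ℂ) * (2*(π:ℂ)*Complex.I) by push_cast; ring,
    Complex.exp_int_mul_two_pi_mul_I]
  simp

lemma lin_int (a1 a2 a3 a4 a5 : ℂ) :
    ∫ θ in (0:ℝ)..(2*π),
      (a1 * Complex.exp ((1:ℤ) * Complex.I * θ) + a2 * Complex.exp ((2:ℤ) * Complex.I * θ)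
        + a3 * Complex.exp ((3:ℤ) * Complex.I * θ) + a4 * Complex.exp ((-1:ℤ) * Complex.I * θ) + a5)
      = a5 * (2*π) := by
  have ii' : ∀ (a c : ℂ), IntervalIntegrable (fun θ : ℝ => a * Complex.exp (c * θ))
      MeasureTheory.volume 0 (2*π) := fun a c =>
    Continuous.intervalIntegrable (by fun_prop) _ _
  rw [intervalIntegral.integral_add ((((ii' _ _).add (ii' _ _)).add (ii' _ _)).add (ii' _ _))
        intervalIntegrable_const,
      intervalIntegral.integral_add (((ii' _ _).add (ii' _ _)).add (ii' _ _)) (ii' _ _),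
      intervalIntegral.integral_add ((ii' _ _).add (ii' _ _)) (ii' _ _),
      intervalIntegral.integral_add (ii' _ _) (ii' _ _),
      intervalIntegral.integral_const_mul, intervalIntegral.integral_const_mul,
      intervalIntegral.integral_const_mul, intervalIntegral.integral_const_mul,
      exp_int_integral 1 one_ne_zero, exp_int_integral 2 two_ne_zero,
      exp_int_integral 3 three_ne_zero, exp_int_integral (-1) (by norm_num),
      intervalIntegral.integral_const]
  simp [mul_comm]

/-- The first trigonometric moment of the quadratic cardioid density. -/
theorem quadratic_cardioid_first_moment (μ1 μ2 r1 r2 : ℝ) (hr1 : 0 ≤ r1) (hr2 : 0 ≤ r2)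
    (I : ℝ) (hI : I = 2 * π * (1 + r1 ^ 2 + r2 ^ 2))
    (f : ℝ → ℝ)
    (hf : ∀ θ, f θ = (1 / I) * (1 + r1 ^ 2 + r2 ^ 2 + 2 * r1 * Real.cos (θ - μ1)
      + 2 * r2 * Real.cos (θ - μ2) + 2 * r1 * r2 * Real.cos (2 * θ - μ1 - μ2))) :
    ∫ θ in (0 : ℝ)..(2 * π), Complex.exp (Complex.I * (θ : ℂ)) * (f θ : ℂ)
      = ((2 * π / I : ℝ) : ℂ) * ((r1 : ℂ) * Complex.exp (Complex.I * (μ1 : ℂ))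
          + (r2 : ℂ) * Complex.exp (Complex.I * (μ2 : ℂ))) := by
  set e1 : ℂ := Complex.exp (Complex.I * μ1) with he1
  set e2 : ℂ := Complex.exp (Complex.I * μ2) with he2
  set f1 : ℂ := Complex.exp (-(Complex.I * μ1)) with hf1
  set f2 : ℂ := Complex.exp (-(Complex.I * μ2)) with hf2
  have hexp : ∀ θ : ℝ, Complex.exp (Complex.I * (θ:ℂ)) * (f θ : ℂ)
      = ((1/I:ℝ):ℂ) * (1 + (r1:ℂ)^2 + (r2:ℂ)^2) * Complex.exp ((1:ℤ) * Complex.I * θ)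
        + ((1/I:ℝ):ℂ) * ((r1:ℂ) * f1 + (r2:ℂ) * f2) * Complex.exp ((2:ℤ) * Complex.I * θ)
        + ((1/I:ℝ):ℂ) * ((r1:ℂ)*r2*(f1*f2)) * Complex.exp ((3:ℤ) * Complex.I * θ)
        + ((1/I:ℝ):ℂ) * ((r1:ℂ)*r2*(e1*e2)) * Complex.exp ((-1:ℤ) * Complex.I * θ)
        + ((1/I:ℝ):ℂ) * ((r1:ℂ) * e1 + (r2:ℂ) * e2) := by
    intro θ
    set eθ : ℂ := Complex.exp (Complex.I * θ) with heθ
    set fθ : ℂ := Complex.exp (-(Complex.I * θ)) with hfθ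
    have hEF : eθ * fθ = 1 := by
      rw [heθ, hfθ, ← Complex.exp_add]; simp
    have h1 : Complex.exp (((θ:ℂ) - μ1)*Complex.I) = eθ * f1 := by
      rw [heθ, hf1, ← Complex.exp_add]; ring_nf
    have h2 : Complex.exp (-((θ:ℂ) - μ1)*Complex.I) = fθ * e1 := by
      rw [hfθ, he1, ← Complex.exp_add]; ring_nf
    have h3 : Complex.exp (((θ:ℂ) - μ2)*Complex.I) = eθ * f2 := by
      rw [heθ, hf2, ← Complex.exp_add]; ring_nf
    have h4 : Complex.exp (-((θ:ℂ) - μ2)*Complex.I) = fθ * e2 := by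
      rw [hfθ, he2, ← Complex.exp_add]; ring_nf
    have h5 : Complex.exp ((2*(θ:ℂ) - μ1 - μ2)*Complex.I) = eθ * eθ * f1 * f2 := by
      rw [heθ, hf1, hf2, ← Complex.exp_add, ← Complex.exp_add, ← Complex.exp_add]; ring_nf
    have h6 : Complex.exp (-(2*(θ:ℂ) - μ1 - μ2)*Complex.I) = fθ * fθ * e1 * e2 := by
      rw [hfθ, he1, he2, ← Complex.exp_add, ← Complex.exp_add, ← Complex.exp_add]; ring_nf
    have g1 : Complex.exp ((1:ℂ) * Complex.I * θ) = eθ := by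
      rw [heθ, one_mul]
    have g2 : Complex.exp ((2:ℂ) * Complex.I * θ) = eθ * eθ := by
      rw [heθ, ← Complex.exp_add]; ring_nf
    have g3 : Complex.exp ((3:ℂ) * Complex.I * θ) = eθ * eθ * eθ := by
      rw [heθ, ← Complex.exp_add, ← Complex.exp_add]; ring_nf
    have g4 : Complex.exp ((-1:ℂ) * Complex.I * θ) = fθ := by
      rw [hfθ]; ring_nf
    rw [hf θ]
    push_cast
    rw [Complex.cos, Complex.cos, Complex.cos, h1, h2, h3, h4, h5, h6, g1, g2, g3, g4]
    linear_combination ((r1:ℂ)*e1 + (r2:ℂ)*e2 + (r1:ℂ)*(r2:ℂ)*e1*e2*fθ) * (1/(I:ℂ)) * hEF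
  rw [intervalIntegral.integral_congr (g := fun θ : ℝ =>
      ((1/I:ℝ):ℂ) * (1 + (r1:ℂ)^2 + (r2:ℂ)^2) * Complex.exp ((1:ℤ) * Complex.I * θ)
        + ((1/I:ℝ):ℂ) * ((r1:ℂ) * f1 + (r2:ℂ) * f2) * Complex.exp ((2:ℤ) * Complex.I * θ)
        + ((1/I:ℝ):ℂ) * ((r1:ℂ)*r2*(f1*f2)) * Complex.exp ((3:ℤ) * Complex.I * θ)
        + ((1/I:ℝ):ℂ) * ((r1:ℂ)*r2*(e1*e2)) * Complex.exp ((-1:ℤ) * Complex.I * θ)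
        + ((1/I:ℝ):ℂ) * ((r1:ℂ) * e1 + (r2:ℂ) * e2)) (fun θ _ => hexp θ), lin_int]
  push_cast
  ring
end

section
/- For the quadratic cardioid density f with parameters μ1, μ2 ∈ ℝ and r1, r2 ≥ 0, the second trigonometric moment is ∫₀^{2π} e^{2iθ} f(θ) dθ = (2π/I)·r1·r2·e^{i(μ1+μ2)}, where I = 2π(1 + r1² + r2²). -/
open Real

lemma qc_exp_int_integral (k : ℤ) (hk : k ≠ 0) :
    ∫ θ in (0 : ℝ)..(2 * π), Complex.exp ((k : ℂ) * Complex.I * (θ : ℂ)) = 0 := by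
  have hc : (k : ℂ) * Complex.I ≠ 0 := by
    simp [Complex.I_ne_zero, hk]
  rw [integral_exp_mul_complex hc]
  have h2 : (k : ℂ) * Complex.I * ((2 : ℝ) * π : ℝ) = (k : ℤ) * (2 * ↑π * Complex.I) := by
    push_cast; ring
  rw [h2, Complex.exp_int_mul_two_pi_mul_I]
  simp

lemma qc_exp_shift (k : ℤ) (hk : k ≠ 0) (c : ℝ) :
    ∫ θ in (0 : ℝ)..(2 * π), Complex.exp (((k : ℝ) * θ + c : ℝ) * Complex.I) = 0 := by
  have : ∀ θ : ℝ, Complex.exp (((k : ℝ) * θ + c : ℝ) * Complex.I)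
      = Complex.exp ((c : ℂ) * Complex.I) * Complex.exp ((k : ℂ) * Complex.I * (θ : ℂ)) := by
    intro θ
    rw [← Complex.exp_add]
    push_cast
    ring_nf
  rw [intervalIntegral.integral_congr (fun θ _ => this θ),
    intervalIntegral.integral_const_mul, qc_exp_int_integral k hk, mul_zero]

lemma qc_cos_lin (μ : ℝ) :
    ∫ θ in (0 : ℝ)..(2 * π),
      Complex.exp (2 * Complex.I * (θ : ℂ)) * ((Real.cos (θ - μ) : ℝ) : ℂ) = 0 := by
  have key : ∀ θ : ℝ, Complex.exp (2 * Complex.I * (θ : ℂ)) * ((Real.cos (θ - μ) : ℝ) : ℂ)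
      = (1 / 2) * Complex.exp ((((3 : ℤ) : ℝ) * θ + (-μ) : ℝ) * Complex.I)
        + (1 / 2) * Complex.exp ((((1 : ℤ) : ℝ) * θ + μ : ℝ) * Complex.I) := by
    intro θ
    rw [Complex.ofReal_cos, Complex.cos, ← mul_div_assoc, mul_add, ← Complex.exp_add,
      ← Complex.exp_add]
    push_cast
    ring_nf
  rw [intervalIntegral.integral_congr (fun θ _ => key θ), intervalIntegral.integral_add,
    intervalIntegral.integral_const_mul, intervalIntegral.integral_const_mul,
    qc_exp_shift 3 (by norm_num) (-μ), qc_exp_shift 1 (by norm_num) μ]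
  · ring
  · apply Continuous.intervalIntegrable; fun_prop
  · apply Continuous.intervalIntegrable; fun_prop

lemma qc_cos_quad (c : ℝ) :
    ∫ θ in (0 : ℝ)..(2 * π),
      Complex.exp (2 * Complex.I * (θ : ℂ)) * ((Real.cos (2 * θ - c) : ℝ) : ℂ)
      = (π : ℂ) * Complex.exp (Complex.I * (c : ℂ)) := by
  have key : ∀ θ : ℝ, Complex.exp (2 * Complex.I * (θ : ℂ)) * ((Real.cos (2 * θ - c) : ℝ) : ℂ)
      = (1 / 2) * Complex.exp ((((4 : ℤ) : ℝ) * θ + (-c) : ℝ) * Complex.I)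
        + (1 / 2) * Complex.exp (Complex.I * (c : ℂ)) := by
    intro θ
    rw [Complex.ofReal_cos, Complex.cos, ← mul_div_assoc, mul_add, ← Complex.exp_add,
      ← Complex.exp_add]
    push_cast
    ring_nf
  rw [intervalIntegral.integral_congr (fun θ _ => key θ), intervalIntegral.integral_add,
    intervalIntegral.integral_const_mul, intervalIntegral.integral_const_mul,
    qc_exp_shift 4 (by norm_num) (-c), intervalIntegral.integral_const]
  · push_cast [Complex.real_smul]; ring
  · apply Continuous.intervalIntegrable; fun_prop
  · apply Continuous.intervalIntegrable; fun_prop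

lemma qc_exp2 :
    ∫ θ in (0 : ℝ)..(2 * π), Complex.exp (2 * Complex.I * (θ : ℂ)) = 0 := by
  have := qc_exp_int_integral 2 (by norm_num)
  simpa using this

/-- The second trigonometric moment of the quadratic cardioid density. -/
theorem quadratic_cardioid_second_moment (μ1 μ2 r1 r2 : ℝ) (hr1 : 0 ≤ r1) (hr2 : 0 ≤ r2)
    (I : ℝ) (hI : I = 2 * π * (1 + r1 ^ 2 + r2 ^ 2))
    (f : ℝ → ℝ)
    (hf : ∀ θ, f θ = (1 / I) * (1 + r1 ^ 2 + r2 ^ 2 + 2 * r1 * Real.cos (θ - μ1)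
      + 2 * r2 * Real.cos (θ - μ2) + 2 * r1 * r2 * Real.cos (2 * θ - μ1 - μ2))) :
    ∫ θ in (0 : ℝ)..(2 * π), Complex.exp (2 * Complex.I * (θ : ℂ)) * (f θ : ℂ)
      = ((2 * π / I : ℝ) : ℂ) * (r1 : ℂ) * (r2 : ℂ)
          * Complex.exp (Complex.I * ((μ1 : ℂ) + (μ2 : ℂ))) := by
  have key : ∀ θ : ℝ, Complex.exp (2 * Complex.I * (θ : ℂ)) * (f θ : ℂ)
      = ((1 / I : ℝ) : ℂ) *
        (((1 + r1 ^ 2 + r2 ^ 2 : ℝ) : ℂ) * Complex.exp (2 * Complex.I * (θ : ℂ))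
          + ((2 * r1 : ℝ) : ℂ) *
              (Complex.exp (2 * Complex.I * (θ : ℂ)) * ((Real.cos (θ - μ1) : ℝ) : ℂ))
          + ((2 * r2 : ℝ) : ℂ) *
              (Complex.exp (2 * Complex.I * (θ : ℂ)) * ((Real.cos (θ - μ2) : ℝ) : ℂ))
          + ((2 * r1 * r2 : ℝ) : ℂ) *
              (Complex.exp (2 * Complex.I * (θ : ℂ)) *
                ((Real.cos (2 * θ - (μ1 + μ2)) : ℝ) : ℂ))) := by
    intro θ
    rw [hf θ, show 2 * θ - (μ1 + μ2) = 2 * θ - μ1 - μ2 by ring]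
    push_cast
    ring
  rw [intervalIntegral.integral_congr (fun θ _ => key θ),
    intervalIntegral.integral_const_mul,
    intervalIntegral.integral_add (by apply Continuous.intervalIntegrable; fun_prop)
      (by apply Continuous.intervalIntegrable; fun_prop),
    intervalIntegral.integral_add (by apply Continuous.intervalIntegrable; fun_prop)
      (by apply Continuous.intervalIntegrable; fun_prop),
    intervalIntegral.integral_add (by apply Continuous.intervalIntegrable; fun_prop)
      (by apply Continuous.intervalIntegrable; fun_prop),
    intervalIntegral.integral_const_mul, intervalIntegral.integral_const_mul,
    intervalIntegral.integral_const_mul, intervalIntegral.integral_const_mul,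
    qc_exp2, qc_cos_lin μ1, qc_cos_lin μ2, qc_cos_quad (μ1 + μ2)]
  push_cast
  ring
end

section
/- For the quadratic cardioid density f with parameters μ1, μ2 ∈ ℝ and r1, r2 ≥ 0, the mean resultant length satisfies |∫₀^{2π} e^{iθ} f(θ) dθ| = √(r1² + r2² + 2·r1·r2·cos(μ1−μ2)) / (1 + r1² + r2²). -/
open Real

set_option maxHeartbeats 1000000

private lemma intexp_zero (c : ℂ) (n : ℤ) (hc : c = n * Complex.I) (hn : n ≠ 0) :
    ∫ θ in (0:ℝ)..(2*π), Complex.exp (c * θ) = 0 := by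
  subst hc
  have hcne : (n : ℂ) * Complex.I ≠ 0 := by
    simp [Complex.I_ne_zero, hn]
  rw [integral_exp_mul_complex hcne]
  have h1 : (n : ℂ) * Complex.I * ((2*π : ℝ) : ℂ) = n * (2 * π * Complex.I) := by
    push_cast; ring
  rw [h1, Complex.exp_int_mul_two_pi_mul_I]
  simp

private lemma cos_exp (x : ℂ) :
    Complex.cos x = (Complex.exp (x * Complex.I) + Complex.exp (-x * Complex.I)) / 2 := by
  rw [eq_div_iff (two_ne_zero)]
  rw [mul_comm]
  exact Complex.two_cos x

/-- The mean resultant length of the quadratic cardioid distribution. -/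
theorem quadratic_cardioid_mean_resultant_length (μ1 μ2 r1 r2 : ℝ)
    (hr1 : 0 ≤ r1) (hr2 : 0 ≤ r2)
    (I : ℝ) (hI : I = 2 * π * (1 + r1 ^ 2 + r2 ^ 2))
    (f : ℝ → ℝ)
    (hf : ∀ θ, f θ = (1 / I) * (1 + r1 ^ 2 + r2 ^ 2 + 2 * r1 * Real.cos (θ - μ1)
      + 2 * r2 * Real.cos (θ - μ2) + 2 * r1 * r2 * Real.cos (2 * θ - μ1 - μ2))) :
    ‖∫ θ in (0 : ℝ)..(2 * π), Complex.exp (Complex.I * (θ : ℂ)) * (f θ : ℂ)‖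
      = Real.sqrt (r1 ^ 2 + r2 ^ 2 + 2 * r1 * r2 * Real.cos (μ1 - μ2))
          / (1 + r1 ^ 2 + r2 ^ 2) := by
  have hπ := Real.pi_pos
  have hA : (0:ℝ) < 1 + r1 ^ 2 + r2 ^ 2 := by positivity
  have hIpos : 0 < I := by rw [hI]; positivity
  have hIne : (I : ℂ) ≠ 0 := by exact_mod_cast hIpos.ne'
  have hpt : ∀ θ : ℝ, Complex.exp (Complex.I * (θ:ℂ)) * (f θ : ℂ)
      = (1 / (I:ℂ)) *
        (((1 + r1^2 + r2^2 : ℝ) : ℂ) * Complex.exp (Complex.I * θ)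
        + ((r1:ℂ) * Complex.exp (-(Complex.I * μ1)) + (r2:ℂ) * Complex.exp (-(Complex.I * μ2)))
            * Complex.exp (2 * Complex.I * θ)
        + (r1:ℂ) * (r2:ℂ) * Complex.exp (-(Complex.I * (μ1+μ2)))
            * Complex.exp (3 * Complex.I * θ)
        + (r1:ℂ) * (r2:ℂ) * Complex.exp (Complex.I * (μ1+μ2))
            * Complex.exp (-Complex.I * θ)
        + ((r1:ℂ) * Complex.exp (Complex.I * μ1) + (r2:ℂ) * Complex.exp (Complex.I * μ2))) := by
    intro θ
    rw [hf θ]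
    push_cast
    rw [cos_exp, cos_exp, cos_exp]
    set a := Complex.exp (Complex.I * (θ:ℂ)) with haa
    have hE1 : a * Complex.exp (((θ:ℂ) - μ1) * Complex.I)
        = Complex.exp (-(Complex.I * μ1)) * Complex.exp (2 * Complex.I * θ) := by
      rw [haa, ← Complex.exp_add, ← Complex.exp_add]; congr 1; ring
    have hE1' : a * Complex.exp (-((θ:ℂ) - μ1) * Complex.I)
        = Complex.exp (Complex.I * μ1) := by
      rw [haa, ← Complex.exp_add]; congr 1; ring
    have hE2 : a * Complex.exp (((θ:ℂ) - μ2) * Complex.I)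
        = Complex.exp (-(Complex.I * μ2)) * Complex.exp (2 * Complex.I * θ) := by
      rw [haa, ← Complex.exp_add, ← Complex.exp_add]; congr 1; ring
    have hE2' : a * Complex.exp (-((θ:ℂ) - μ2) * Complex.I)
        = Complex.exp (Complex.I * μ2) := by
      rw [haa, ← Complex.exp_add]; congr 1; ring
    have hE3 : a * Complex.exp ((2*(θ:ℂ) - μ1 - μ2) * Complex.I)
        = Complex.exp (-(Complex.I * (μ1+μ2))) * Complex.exp (3 * Complex.I * θ) := by
      rw [haa, ← Complex.exp_add, ← Complex.exp_add]; congr 1; ring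
    have hE3' : a * Complex.exp (-(2*(θ:ℂ) - μ1 - μ2) * Complex.I)
        = Complex.exp (Complex.I * (μ1+μ2)) * Complex.exp (-Complex.I * θ) := by
      rw [haa, ← Complex.exp_add, ← Complex.exp_add]; congr 1; ring
    calc a * (1 / (I:ℂ) *
        (1 + (r1:ℂ) ^ 2 + (r2:ℂ) ^ 2
          + 2 * r1 * ((Complex.exp (((θ:ℂ) - μ1) * Complex.I)
              + Complex.exp (-((θ:ℂ) - μ1) * Complex.I)) / 2)
          + 2 * r2 * ((Complex.exp (((θ:ℂ) - μ2) * Complex.I)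
              + Complex.exp (-((θ:ℂ) - μ2) * Complex.I)) / 2)
          + 2 * r1 * r2 * ((Complex.exp ((2*(θ:ℂ) - μ1 - μ2) * Complex.I)
              + Complex.exp (-(2*(θ:ℂ) - μ1 - μ2) * Complex.I)) / 2)))
        = (1 / (I:ℂ)) *
          ((1 + (r1:ℂ)^2 + (r2:ℂ)^2) * a
            + (r1:ℂ) * (a * Complex.exp (((θ:ℂ) - μ1) * Complex.I))
            + (r1:ℂ) * (a * Complex.exp (-((θ:ℂ) - μ1) * Complex.I))
            + (r2:ℂ) * (a * Complex.exp (((θ:ℂ) - μ2) * Complex.I))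
            + (r2:ℂ) * (a * Complex.exp (-((θ:ℂ) - μ2) * Complex.I))
            + (r1:ℂ) * r2 * (a * Complex.exp ((2*(θ:ℂ) - μ1 - μ2) * Complex.I))
            + (r1:ℂ) * r2 * (a * Complex.exp (-(2*(θ:ℂ) - μ1 - μ2) * Complex.I))) := by
          ring
      _ = _ := by rw [hE1, hE1', hE2, hE2', hE3, hE3']; ring
  have hInt : ∀ c : ℂ, IntervalIntegrable (fun θ : ℝ => Complex.exp (c * θ))
      MeasureTheory.volume 0 (2*π) := by
    intro c
    exact (Complex.continuous_exp.comp
      (continuous_const.mul Complex.continuous_ofReal)).intervalIntegrable _ _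
  have hval : (∫ θ in (0 : ℝ)..(2 * π), Complex.exp (Complex.I * (θ : ℂ)) * (f θ : ℂ))
      = (2*π) * ((1 / (I:ℂ)) *
          ((r1:ℂ) * Complex.exp (Complex.I * μ1) + (r2:ℂ) * Complex.exp (Complex.I * μ2))) := by
    rw [intervalIntegral.integral_congr (fun θ _ => hpt θ)]
    rw [intervalIntegral.integral_const_mul]
    rw [intervalIntegral.integral_add ((((hInt _).const_mul _).add ((hInt _).const_mul _)
        |>.add ((hInt _).const_mul _)).add ((hInt _).const_mul _)) intervalIntegrable_const]
    rw [intervalIntegral.integral_add (((hInt _).const_mul _).add ((hInt _).const_mul _)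
        |>.add ((hInt _).const_mul _)) ((hInt _).const_mul _)]
    rw [intervalIntegral.integral_add (((hInt _).const_mul _).add ((hInt _).const_mul _))
        ((hInt _).const_mul _)]
    rw [intervalIntegral.integral_add ((hInt _).const_mul _) ((hInt _).const_mul _)]
    rw [intervalIntegral.integral_const_mul, intervalIntegral.integral_const_mul,
      intervalIntegral.integral_const_mul, intervalIntegral.integral_const_mul,
      intervalIntegral.integral_const]
    rw [intexp_zero Complex.I 1 (by simp) one_ne_zero,
      intexp_zero (2*Complex.I) 2 (by norm_num) two_ne_zero,
      intexp_zero (3*Complex.I) 3 (by norm_num) (by norm_num),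
      intexp_zero (-Complex.I) (-1) (by simp) (by norm_num)]
    simp only [mul_zero, zero_add, sub_zero]
    rw [Complex.real_smul]
    push_cast
    ring
  rw [hval]
  have hnum : ‖(r1:ℂ) * Complex.exp (Complex.I * μ1)
      + (r2:ℂ) * Complex.exp (Complex.I * μ2)‖
      = Real.sqrt (r1 ^ 2 + r2 ^ 2 + 2 * r1 * r2 * Real.cos (μ1 - μ2)) := by
    rw [Complex.norm_def, Complex.normSq_apply]
    have h1 : Complex.exp (Complex.I * (μ1:ℂ)) = Complex.cos μ1 + Complex.sin μ1 * Complex.I := by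
      rw [mul_comm]; exact Complex.exp_mul_I _
    have h2 : Complex.exp (Complex.I * (μ2:ℂ)) = Complex.cos μ2 + Complex.sin μ2 * Complex.I := by
      rw [mul_comm]; exact Complex.exp_mul_I _
    rw [h1, h2]
    congr 1
    simp only [Complex.add_re, Complex.add_im, Complex.mul_re, Complex.mul_im,
      Complex.ofReal_re, Complex.ofReal_im, Complex.I_re, Complex.I_im,
      Complex.cos_ofReal_re, Complex.cos_ofReal_im, Complex.sin_ofReal_re, Complex.sin_ofReal_im]
    rw [Real.cos_sub]
    linear_combination r1^2 * (Real.sin_sq_add_cos_sq μ1) + r2^2 * (Real.sin_sq_add_cos_sq μ2)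
  simp only [norm_mul, norm_div, norm_inv, norm_one, Complex.norm_real, Real.norm_eq_abs, Complex.norm_two, one_div]
  rw [hnum, abs_of_pos hπ, abs_of_pos hIpos, hI]
  field_simp
end

section
/- Let f be the quadratic cardioid density with parameters μ1, μ2 ∈ ℝ and r1, r2 ≥ 0. For every φ ∈ ℝ, one has ∫_φ^{φ+π} f(θ) dθ = 1/2 − (4/I)·(r1·sin(φ−μ1) + r2·sin(φ−μ2)), where I = 2π(1 + r1² + r2²). In particular, ∫_φ^{φ+π} f(θ) dθ = 1/2 if and only if r1·sin(φ−μ1) + r2·sin(φ−μ2) = 0. -/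
open Real

/-- The probability of the half-circle arc `[φ, φ + π]` under the quadratic cardioid
density, and the characterization of median directions. -/
theorem quadratic_cardioid_half_arc_integral (μ1 μ2 r1 r2 : ℝ)
    (hr1 : 0 ≤ r1) (hr2 : 0 ≤ r2)
    (I : ℝ) (hI : I = 2 * π * (1 + r1 ^ 2 + r2 ^ 2))
    (f : ℝ → ℝ)
    (hf : ∀ θ, f θ = (1 / I) * (1 + r1 ^ 2 + r2 ^ 2 + 2 * r1 * Real.cos (θ - μ1)
      + 2 * r2 * Real.cos (θ - μ2) + 2 * r1 * r2 * Real.cos (2 * θ - μ1 - μ2)))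
    (φ : ℝ) :
    (∫ θ in φ..(φ + π), f θ)
        = 1 / 2 - (4 / I) * (r1 * Real.sin (φ - μ1) + r2 * Real.sin (φ - μ2))
    ∧ ((∫ θ in φ..(φ + π), f θ) = 1 / 2
        ↔ r1 * Real.sin (φ - μ1) + r2 * Real.sin (φ - μ2) = 0) := by
  have hs : (0:ℝ) < 1 + r1 ^ 2 + r2 ^ 2 := by positivity
  have hIpos : 0 < I := by rw [hI]; positivity
  have hIne : I ≠ 0 := ne_of_gt hIpos
  set F : ℝ → ℝ := fun θ => (1 / I) * ((1 + r1 ^ 2 + r2 ^ 2) * θ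
      + 2 * r1 * Real.sin (θ - μ1) + 2 * r2 * Real.sin (θ - μ2)
      + r1 * r2 * Real.sin (2 * θ - μ1 - μ2)) with hF
  have hderiv : ∀ θ, HasDerivAt F (f θ) θ := by
    intro θ
    have h1 : HasDerivAt (fun θ : ℝ => Real.sin (θ - μ1)) (Real.cos (θ - μ1)) θ := by
      simpa [Function.comp_def] using ((Real.hasDerivAt_sin (θ - μ1)).comp θ
        ((hasDerivAt_id θ).sub_const μ1))
    have h2 : HasDerivAt (fun θ : ℝ => Real.sin (θ - μ2)) (Real.cos (θ - μ2)) θ := by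
      simpa [Function.comp_def] using ((Real.hasDerivAt_sin (θ - μ2)).comp θ
        ((hasDerivAt_id θ).sub_const μ2))
    have h3 : HasDerivAt (fun θ : ℝ => Real.sin (2 * θ - μ1 - μ2))
        (2 * Real.cos (2 * θ - μ1 - μ2)) θ := by
      have : HasDerivAt (fun θ : ℝ => 2 * θ - μ1 - μ2) 2 θ := by
        simpa using (((hasDerivAt_id θ).const_mul 2).sub_const μ1).sub_const μ2
      simpa [mul_comm, Function.comp_def] using (Real.hasDerivAt_sin (2 * θ - μ1 - μ2)).comp θ this
    have h0 : HasDerivAt (fun θ : ℝ => (1 + r1 ^ 2 + r2 ^ 2) * θ)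
        (1 + r1 ^ 2 + r2 ^ 2) θ := by
      simpa using (hasDerivAt_id θ).const_mul (1 + r1 ^ 2 + r2 ^ 2)
    have := (((h0.add ((h1.const_mul (2 * r1)))).add (h2.const_mul (2 * r2))).add
        (h3.const_mul (r1 * r2))).const_mul (1 / I)
    rw [hf θ]
    exact this.congr_deriv (by ring)
  have hcont : IntervalIntegrable f MeasureTheory.volume φ (φ + π) := by
    apply Continuous.intervalIntegrable
    have : Continuous fun θ => (1 / I) * (1 + r1 ^ 2 + r2 ^ 2 + 2 * r1 * Real.cos (θ - μ1)
      + 2 * r2 * Real.cos (θ - μ2) + 2 * r1 * r2 * Real.cos (2 * θ - μ1 - μ2)) := by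
      fun_prop
    exact this.congr fun θ => (hf θ).symm
  have hint : (∫ θ in φ..(φ + π), f θ) = F (φ + π) - F φ :=
    intervalIntegral.integral_eq_sub_of_hasDerivAt (fun θ _ => hderiv θ) hcont
  have e1 : φ + π - μ1 = (φ - μ1) + π := by ring
  have e2 : φ + π - μ2 = (φ - μ2) + π := by ring
  have e3 : 2 * (φ + π) - μ1 - μ2 = (2 * φ - μ1 - μ2) + 2 * π := by ring
  have hval : (∫ θ in φ..(φ + π), f θ)
      = 1 / 2 - (4 / I) * (r1 * Real.sin (φ - μ1) + r2 * Real.sin (φ - μ2)) := by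
    rw [hint, hF]
    simp only [e1, e2, e3, Real.sin_add_pi, Real.sin_add_two_pi]
    rw [hI]
    field_simp
    ring
  refine ⟨hval, ?_⟩
  rw [hval]
  constructor
  · intro h
    have h4 : (4 / I) ≠ 0 := by positivity
    have := sub_eq_self.mp h
    exact (mul_eq_zero.mp this).resolve_left h4
  · intro h; rw [h]; ring
end

section
/- Let f be the quadratic cardioid density with parameters μ1, μ2 ∈ ℝ and r1, r2 ≥ 0. If r1 = r2, then f is symmetric about (μ1+μ2)/2, i.e. f((μ1+μ2)/2 + t) = f((μ1+μ2)/2 − t) for all t ∈ ℝ. If μ1 = μ2, then f is symmetric about μ1. If r2 = 0 (respectively r1 = 0), then f is symmetric about μ1 (respectively μ2). -/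
open Real

/-- Sufficient conditions for symmetry of the quadratic cardioid density. -/
theorem quadratic_cardioid_symmetry_sufficient (μ1 μ2 r1 r2 : ℝ)
    (hr1 : 0 ≤ r1) (hr2 : 0 ≤ r2)
    (I : ℝ) (hI : I = 2 * π * (1 + r1 ^ 2 + r2 ^ 2))
    (f : ℝ → ℝ)
    (hf : ∀ θ, f θ = (1 / I) * (1 + r1 ^ 2 + r2 ^ 2 + 2 * r1 * Real.cos (θ - μ1)
      + 2 * r2 * Real.cos (θ - μ2) + 2 * r1 * r2 * Real.cos (2 * θ - μ1 - μ2))) :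
    (r1 = r2 → ∀ t : ℝ, f ((μ1 + μ2) / 2 + t) = f ((μ1 + μ2) / 2 - t))
    ∧ (μ1 = μ2 → ∀ t : ℝ, f (μ1 + t) = f (μ1 - t))
    ∧ (r2 = 0 → ∀ t : ℝ, f (μ1 + t) = f (μ1 - t))
    ∧ (r1 = 0 → ∀ t : ℝ, f (μ2 + t) = f (μ2 - t)) := by
  refine ⟨?_, ?_, ?_, ?_⟩
  · intro h t
    subst h
    rw [hf, hf,
      show (μ1 + μ2) / 2 + t - μ1 = -((μ1 + μ2) / 2 - t - μ2) by ring,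
      show (μ1 + μ2) / 2 + t - μ2 = -((μ1 + μ2) / 2 - t - μ1) by ring,
      show 2 * ((μ1 + μ2) / 2 + t) - μ1 - μ2 = -(2 * ((μ1 + μ2) / 2 - t) - μ1 - μ2) by ring,
      Real.cos_neg, Real.cos_neg, Real.cos_neg]
    ring
  · intro h t
    subst h
    rw [hf, hf,
      show μ1 + t - μ1 = -(μ1 - t - μ1) by ring,
      show 2 * (μ1 + t) - μ1 - μ1 = -(2 * (μ1 - t) - μ1 - μ1) by ring,
      Real.cos_neg, Real.cos_neg]
  · intro h t
    subst h
    rw [hf, hf,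
      show μ1 + t - μ1 = -(μ1 - t - μ1) by ring,
      show μ1 + t - μ2 = μ1 + t - μ2 by ring, Real.cos_neg]
    ring
  · intro h t
    subst h
    rw [hf, hf,
      show μ2 + t - μ2 = -(μ2 - t - μ2) by ring, Real.cos_neg]
    ring
end

section
/- Let f be the quadratic cardioid density with parameters μ1 = μ2 = μ ∈ ℝ and r1, r2 > 0. Then θ = μ is a strict local maximum of f (it is a mode of the distribution). -/
open Real

/-- When `μ1 = μ2 = μ` and `r1, r2 > 0`, the point `θ = μ` is a strict local maximum
(a mode) of the quadratic cardioid density. -/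
theorem quadratic_cardioid_mode_at_mu (μ r1 r2 : ℝ)
    (hr1 : 0 < r1) (hr2 : 0 < r2)
    (I : ℝ) (hI : I = 2 * π * (1 + r1 ^ 2 + r2 ^ 2))
    (f : ℝ → ℝ)
    (hf : ∀ θ, f θ = (1 / I) * (1 + r1 ^ 2 + r2 ^ 2 + 2 * r1 * Real.cos (θ - μ)
      + 2 * r2 * Real.cos (θ - μ) + 2 * r1 * r2 * Real.cos (2 * θ - μ - μ))) :
    ∃ ε > 0, ∀ θ : ℝ, θ ≠ μ → |θ - μ| < ε → f θ < f μ := by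
  have hπ := Real.pi_gt_three
  have hIpos : 0 < I := by rw [hI]; positivity
  refine ⟨1, one_pos, fun θ hθ hθε => ?_⟩
  set x := θ - μ with hx
  have hxne : x ≠ 0 := sub_ne_zero.mpr hθ
  have hxlt : x < 2 * π := lt_of_le_of_lt (le_of_abs_le hθε.le) (by linarith)
  have hxgt : -(2 * π) < x := by
    have := abs_lt.mp hθε
    linarith [this.1]
  have hcos1 : Real.cos x < 1 := by
    rcases lt_or_eq_of_le (Real.cos_le_one x) with h | h
    · exact h
    · exact absurd ((Real.cos_eq_one_iff_of_lt_of_lt hxgt hxlt).mp h) hxne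
  have hcos2 : Real.cos (2 * θ - μ - μ) ≤ 1 := by
    have : 2 * θ - μ - μ = 2 * x := by ring
    rw [this]; exact Real.cos_le_one _
  rw [hf θ, hf μ]
  have h1 : Real.cos (μ - μ) = 1 := by simp
  have h2 : Real.cos (2 * μ - μ - μ) = 1 := by
    have : 2 * μ - μ - μ = 0 := by ring
    rw [this, Real.cos_zero]
  rw [h1, h2]
  have hcx : Real.cos (θ - μ) < 1 := hcos1
  have hinv : 0 < 1 / I := by positivity
  apply mul_lt_mul_of_pos_left _ hinv
  nlinarith [mul_pos hr1 (sub_pos.mpr hcx), mul_pos hr2 (sub_pos.mpr hcx),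
    mul_nonneg (mul_pos hr1 hr2).le (sub_nonneg.mpr hcos2)]
end

section
/- Let f be the quadratic cardioid density with parameters μ1 = μ2 = μ ∈ ℝ and r1, r2 > 0, and suppose 4·r1·r2 ≠ r1 + r2. Then θ = μ + π is a critical point of f, and it is a strict local maximum of f if and only if 4·r1·r2 > r1 + r2; if 4·r1·r2 < r1 + r2 then θ = μ + π is a strict local minimum of f. -/
set_option maxHeartbeats 1000000


open Real

/-- When `μ1 = μ2 = μ` and `r1, r2 > 0` with `4·r1·r2 ≠ r1 + r2`, the point `θ = μ + π`
is a critical point of the quadratic cardioid density; it is a strict local maximum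
iff `4·r1·r2 > r1 + r2`, and a strict local minimum if `4·r1·r2 < r1 + r2`. -/
theorem quadratic_cardioid_antipode_critical (μ r1 r2 : ℝ)
    (hr1 : 0 < r1) (hr2 : 0 < r2) (hne : 4 * r1 * r2 ≠ r1 + r2)
    (I : ℝ) (hI : I = 2 * π * (1 + r1 ^ 2 + r2 ^ 2))
    (f : ℝ → ℝ)
    (hf : ∀ θ, f θ = (1 / I) * (1 + r1 ^ 2 + r2 ^ 2 + 2 * r1 * Real.cos (θ - μ)
      + 2 * r2 * Real.cos (θ - μ) + 2 * r1 * r2 * Real.cos (2 * θ - μ - μ))) :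
    deriv f (μ + π) = 0
    ∧ ((∃ ε > 0, ∀ θ : ℝ, θ ≠ μ + π → |θ - (μ + π)| < ε → f θ < f (μ + π))
        ↔ 4 * r1 * r2 > r1 + r2)
    ∧ (4 * r1 * r2 < r1 + r2 →
        ∃ ε > 0, ∀ θ : ℝ, θ ≠ μ + π → |θ - (μ + π)| < ε → f (μ + π) < f θ) := by
  have hπ := Real.pi_pos
  have hπ3 := Real.pi_gt_three
  have hIpos : 0 < I := by
    rw [hI]; positivity
  -- key difference identity
  set s : ℝ := r1 + r2 with hs
  set p : ℝ := r1 * r2 with hp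
  have hppos : 0 < p := mul_pos hr1 hr2
  set d : ℝ := s - 4 * p with hd
  clear_value d
  clear_value p
  clear_value s
  have hdne : d ≠ 0 := by
    intro h; apply hne; simp only [hd, hs, hp] at h; linarith
  have key : ∀ θ : ℝ, f θ - f (μ + π)
      = (2 / I) * (1 - Real.cos (θ - (μ + π))) * (d + 2 * p * (1 - Real.cos (θ - (μ + π)))) := by
    intro θ
    have e1 : θ - μ = (θ - (μ + π)) + π := by ring
    have e2 : 2 * θ - μ - μ = 2 * (θ - (μ + π)) + 2 * π := by ring
    have e3 : μ + π - μ = π := by ring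
    have e4 : 2 * (μ + π) - μ - μ = 2 * π := by ring
    rw [hf θ, hf (μ + π), e1, e2, e3, e4, Real.cos_add_pi, Real.cos_add_two_pi,
      Real.cos_two_mul, Real.cos_pi, Real.cos_two_pi]
    simp only [hd, hs, hp]
    ring
  -- sign lemma
  have sign : ∃ ε > 0, ∀ θ : ℝ, θ ≠ μ + π → |θ - (μ + π)| < ε →
      0 < (f θ - f (μ + π)) * d := by
    refine ⟨min 1 (Real.sqrt (|d| / p)), lt_min one_pos (Real.sqrt_pos.2 (by positivity)), ?_⟩
    intro θ hθ habs
    set t : ℝ := θ - (μ + π) with htdef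
    clear_value t
    have ht0 : t ≠ 0 := by rw [htdef]; exact sub_ne_zero.2 hθ
    have ht1 : |t| < 1 := lt_of_lt_of_le habs (min_le_left _ _)
    have ht2 : |t| < Real.sqrt (|d| / p) := lt_of_lt_of_le habs (min_le_right _ _)
    have htsq : t ^ 2 < |d| / p := by
      calc t ^ 2 = |t| ^ 2 := (sq_abs t).symm
        _ < Real.sqrt (|d| / p) ^ 2 := by
            exact pow_lt_pow_left₀ ht2 (abs_nonneg t) two_ne_zero
        _ = |d| / p := Real.sq_sqrt (by positivity)
    have hcos_le : Real.cos t ≤ 1 := Real.cos_le_one t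
    have hcos_ne : Real.cos t ≠ 1 := by
      intro h
      have hb1 : -(2 * π) < t := by
        have := abs_lt.1 ht1; linarith
      have hb2 : t < 2 * π := by
        have := abs_lt.1 ht1; linarith
      exact ht0 ((Real.cos_eq_one_iff_of_lt_of_lt hb1 hb2).1 h)
    have h1 : 0 < 1 - Real.cos t := by
      cases lt_or_eq_of_le hcos_le with
      | inl h => linarith
      | inr h => exact absurd h hcos_ne
    have hq : 1 - t ^ 2 / 2 ≤ Real.cos t := Real.one_sub_sq_div_two_le_cos
    have hsmall : 2 * p * (1 - Real.cos t) < |d| := by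
      have h2 : 2 * p * (1 - Real.cos t) ≤ p * t ^ 2 := by
        have h2' : 2 * (1 - Real.cos t) ≤ t ^ 2 := by linarith
        calc 2 * p * (1 - Real.cos t) = p * (2 * (1 - Real.cos t)) := by ring
          _ ≤ p * t ^ 2 := mul_le_mul_of_nonneg_left h2' hppos.le
      have h3 : p * t ^ 2 < |d| := by
        have := (lt_div_iff₀ hppos).1 htsq
        linarith
      linarith
    have hkey := key θ
    rw [← htdef] at hkey
    have hfac : 0 < (2 / I) * (1 - Real.cos t) := by positivity
    have he : 0 < 2 * p * (1 - Real.cos t) := by positivity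
    have hprod : 0 < (d + 2 * p * (1 - Real.cos t)) * d := by
      rcases lt_or_gt_of_ne hdne with hdlt | hdgt
      · have : |d| = -d := abs_of_neg hdlt
        nlinarith
      · have : |d| = d := abs_of_pos hdgt
        nlinarith
    calc 0 < ((2 / I) * (1 - Real.cos t)) * ((d + 2 * p * (1 - Real.cos t)) * d) :=
          mul_pos hfac hprod
      _ = (f θ - f (μ + π)) * d := by rw [hkey]; ring
  refine ⟨?_, ?_, ?_⟩
  · -- derivative zero
    have hF : f = fun θ => (1 / I) * (1 + r1 ^ 2 + r2 ^ 2 + 2 * r1 * Real.cos (θ - μ)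
        + 2 * r2 * Real.cos (θ - μ) + 2 * r1 * r2 * Real.cos (2 * θ - μ - μ)) := funext hf
    have h1 : HasDerivAt (fun θ : ℝ => θ - μ) 1 (μ + π) := (hasDerivAt_id _).sub_const μ
    have hc1 := h1.cos
    have h2 : HasDerivAt (fun θ : ℝ => 2 * θ - μ - μ) 2 (μ + π) := by
      simpa using (((hasDerivAt_id (μ + π)).const_mul 2).sub_const μ).sub_const μ
    have hc2 := h2.cos
    have hg : HasDerivAt f
        ((1 / I) * ((2 * r1 * (-Real.sin (μ + π - μ) * 1)
          + 2 * r2 * (-Real.sin (μ + π - μ) * 1))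
          + 2 * r1 * r2 * (-Real.sin (2 * (μ + π) - μ - μ) * 2))) (μ + π) := by
      rw [hF]
      exact ((((hc1.const_mul (2 * r1)).const_add (1 + r1 ^ 2 + r2 ^ 2)).add
        (hc1.const_mul (2 * r2))).add (hc2.const_mul (2 * r1 * r2))).const_mul (1 / I)
    have hs1 : Real.sin (μ + π - μ) = 0 := by
      rw [show μ + π - μ = π by ring, Real.sin_pi]
    have hs2 : Real.sin (2 * (μ + π) - μ - μ) = 0 := by
      rw [show 2 * (μ + π) - μ - μ = 2 * π by ring, Real.sin_two_pi]
    rw [hg.deriv, hs1, hs2]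
    ring
  · -- iff
    constructor
    · intro ⟨ε, hε, hmax⟩
      rcases lt_or_gt_of_ne hne with hlt | hgt
      · exfalso
        obtain ⟨ε', hε', hsgn⟩ := sign
        set θ := μ + π + min ε ε' / 2 with hθdef
        clear_value θ
        have hmin : 0 < min ε ε' := lt_min hε hε'
        have hθne : θ ≠ μ + π := by
          simp only [hθdef]; intro h; linarith
        have habs : |θ - (μ + π)| = min ε ε' / 2 := by
          rw [hθdef, show μ + π + min ε ε' / 2 - (μ + π) = min ε ε' / 2 by ring,
            abs_of_pos (by linarith)]
        have h1 := hmax θ hθne (by rw [habs]; calc min ε ε'/2 < min ε ε' := by linarith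
                                                  _ ≤ ε := min_le_left _ _)
        have h2 := hsgn θ hθne (by rw [habs]; calc min ε ε'/2 < min ε ε' := by linarith
                                                  _ ≤ ε' := min_le_right _ _)
        have hdpos : 0 < d := by simp only [hd, hs, hp]; linarith
        linarith [mul_pos (sub_pos.2 h1) hdpos]
      · simp only [hs, hp] at hgt ⊢; linarith
    · intro hgt
      obtain ⟨ε, hε, hsgn⟩ := sign
      refine ⟨ε, hε, fun θ hθ habs => ?_⟩
      have h := hsgn θ hθ habs
      have hdneg : d < 0 := by simp only [hd, hs, hp]; linarith
      by_contra hcon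
      push_neg at hcon
      linarith [mul_nonpos_of_nonneg_of_nonpos
        (show (0:ℝ) ≤ f θ - f (μ + π) by linarith) hdneg.le]
  · intro hlt
    obtain ⟨ε, hε, hsgn⟩ := sign
    refine ⟨ε, hε, fun θ hθ habs => ?_⟩
    have h := hsgn θ hθ habs
    have hdpos : 0 < d := by simp only [hd, hs, hp]; linarith
    by_contra hcon
    push_neg at hcon
    linarith [mul_nonpos_of_nonpos_of_nonneg
      (show f θ - f (μ + π) ≤ 0 by linarith) hdpos.le]
end

section
/- Let f be the quadratic cardioid density with parameters μ1 = μ2 = μ ∈ ℝ and r1, r2 > 0, and suppose 4·r1·r2 > r1 + r2. Then every θ with cos(θ−μ) = −(r1 + r2)/(4·r1·r2) is a critical point of f and is a strict local minimum (anti-mode) of f; there are exactly two such points in each period [μ, μ + 2π). -/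
open Real

/-- When `μ1 = μ2 = μ`, `r1, r2 > 0` and `4·r1·r2 > r1 + r2`, every `θ` with
`cos(θ−μ) = −(r1+r2)/(4·r1·r2)` is a critical point and a strict local minimum
(anti-mode) of the quadratic cardioid density, and there are exactly two such
points in `[μ, μ + 2π)`. -/
theorem quadratic_cardioid_antimodes (μ r1 r2 : ℝ)
    (hr1 : 0 < r1) (hr2 : 0 < r2) (hbi : 4 * r1 * r2 > r1 + r2)
    (I : ℝ) (hI : I = 2 * π * (1 + r1 ^ 2 + r2 ^ 2))
    (f : ℝ → ℝ)
    (hf : ∀ θ, f θ = (1 / I) * (1 + r1 ^ 2 + r2 ^ 2 + 2 * r1 * Real.cos (θ - μ)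
      + 2 * r2 * Real.cos (θ - μ) + 2 * r1 * r2 * Real.cos (2 * θ - μ - μ))) :
    (∀ θ : ℝ, Real.cos (θ - μ) = -(r1 + r2) / (4 * r1 * r2) →
      deriv f θ = 0 ∧ ∃ ε > 0, ∀ θ' : ℝ, θ' ≠ θ → |θ' - θ| < ε → f θ < f θ')
    ∧ ∃ θ1 θ2 : ℝ, θ1 ≠ θ2
        ∧ θ1 ∈ Set.Ico μ (μ + 2 * π) ∧ θ2 ∈ Set.Ico μ (μ + 2 * π)
        ∧ Real.cos (θ1 - μ) = -(r1 + r2) / (4 * r1 * r2)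
        ∧ Real.cos (θ2 - μ) = -(r1 + r2) / (4 * r1 * r2)
        ∧ ∀ θ ∈ Set.Ico μ (μ + 2 * π),
            Real.cos (θ - μ) = -(r1 + r2) / (4 * r1 * r2) → θ = θ1 ∨ θ = θ2 := by
  have hπ : (0:ℝ) < π := Real.pi_pos
  set c : ℝ := -(r1 + r2) / (4 * r1 * r2) with hc_def
  have h4 : (0:ℝ) < 4 * r1 * r2 := by positivity
  have hc_neg : c < 0 := by
    apply div_neg_of_neg_of_pos _ h4
    nlinarith
  have hc_gt : -1 < c := by
    rw [hc_def, neg_div, neg_lt_neg_iff, div_lt_one h4]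
    exact hbi
  have hc_lt1 : c < 1 := lt_trans hc_neg one_pos
  have hI_pos : 0 < I := by rw [hI]; positivity
  have hc4 : 4 * r1 * r2 * c = -(r1 + r2) := by
    rw [hc_def]; field_simp
  -- key identity : f t = f θ₀ + (4 r1 r2 / I) (cos(t-μ) - c)^2 for any θ₀ with cos(θ₀-μ)=c
  have key : ∀ θ₀ : ℝ, Real.cos (θ₀ - μ) = c → ∀ t : ℝ,
      f t = f θ₀ + (4 * r1 * r2 / I) * (Real.cos (t - μ) - c) ^ 2 := by
    intro θ₀ hθ₀ t
    rw [hf t, hf θ₀]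
    have e1 : Real.cos (2 * t - μ - μ) = 2 * Real.cos (t - μ) ^ 2 - 1 := by
      rw [show 2 * t - μ - μ = 2 * (t - μ) by ring, Real.cos_two_mul]
    have e2 : Real.cos (2 * θ₀ - μ - μ) = 2 * Real.cos (θ₀ - μ) ^ 2 - 1 := by
      rw [show 2 * θ₀ - μ - μ = 2 * (θ₀ - μ) by ring, Real.cos_two_mul]
    rw [e1, e2, hθ₀]
    have hIne : I ≠ 0 := ne_of_gt hI_pos
    field_simp
    nlinarith [hc4, sq_nonneg (Real.cos (t - μ) - c)]
  constructor
  · intro θ hθ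
    set s0 := θ - μ with hs0
    constructor
    · -- derivative is zero
      have h1 : HasDerivAt (fun t : ℝ => Real.cos (t - μ)) (-Real.sin s0) θ := by
        have h := (Real.hasDerivAt_cos (θ - μ)).comp θ ((hasDerivAt_id θ).sub_const μ)
        simp only [mul_one] at h; exact h
      have hlin : HasDerivAt (fun t : ℝ => 2 * t - μ - μ) 2 θ := by
        simpa using (((hasDerivAt_id θ).const_mul 2).sub_const μ).sub_const μ
      have h2 : HasDerivAt (fun t : ℝ => Real.cos (2 * t - μ - μ))
          (-Real.sin (2 * θ - μ - μ) * 2) θ := by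
        have h := (Real.hasDerivAt_cos (2 * θ - μ - μ)).comp θ hlin
        exact h
      have hfd : HasDerivAt f
          ((1 / I) * ((2 * r1 * (-Real.sin s0) + 2 * r2 * (-Real.sin s0))
            + 2 * r1 * r2 * (-Real.sin (2 * θ - μ - μ) * 2))) θ := by
        have hF : HasDerivAt (fun t : ℝ => (1 / I) * (1 + r1 ^ 2 + r2 ^ 2
            + 2 * r1 * Real.cos (t - μ) + 2 * r2 * Real.cos (t - μ)
            + 2 * r1 * r2 * Real.cos (2 * t - μ - μ)))
            ((1 / I) * ((2 * r1 * (-Real.sin s0) + 2 * r2 * (-Real.sin s0))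
              + 2 * r1 * r2 * (-Real.sin (2 * θ - μ - μ) * 2))) θ := by
          have := ((((hasDerivAt_const θ (1 + r1 ^ 2 + r2 ^ 2)).add
            (h1.const_mul (2 * r1))).add (h1.const_mul (2 * r2))).add
            (h2.const_mul (2 * r1 * r2))).const_mul (1 / I)
          refine this.congr_deriv ?_
          ring
        have hfe : f = fun t : ℝ => (1 / I) * (1 + r1 ^ 2 + r2 ^ 2
            + 2 * r1 * Real.cos (t - μ) + 2 * r2 * Real.cos (t - μ)
            + 2 * r1 * r2 * Real.cos (2 * t - μ - μ)) := funext hf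
        rw [hfe]; exact hF
      rw [hfd.deriv]
      have hsin2 : Real.sin (2 * θ - μ - μ) = 2 * Real.sin s0 * Real.cos s0 := by
        rw [show 2 * θ - μ - μ = 2 * (θ - μ) by ring, Real.sin_two_mul]
      rw [hsin2, hθ]
      have hz : 2 * r1 * (-Real.sin s0) + 2 * r2 * (-Real.sin s0)
          + 2 * r1 * r2 * (-(2 * Real.sin s0 * c) * 2) = 0 := by
        linear_combination (-2 * Real.sin s0) * hc4
      rw [hz, mul_zero]
    · -- strict local minimum
      have hsin_ne : Real.sin s0 ≠ 0 := by
        intro h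
        have h2 : Real.cos s0 ^ 2 = 1 := by
          have := Real.sin_sq_add_cos_sq s0
          nlinarith
        rw [hθ] at h2
        nlinarith
      -- get ε so that sin has constant sign on the ball around s0
      have hcont : Continuous fun s : ℝ => Real.sin s := Real.continuous_sin
      have hne_nhds : ∀ᶠ s in nhds s0, Real.sin s ≠ 0 :=
        (hcont.continuousAt (x := s0)).eventually_ne hsin_ne
      rcases Metric.eventually_nhds_iff.mp hne_nhds with ⟨ε, hε, hball⟩
      refine ⟨ε, hε, ?_⟩
      intro θ' hne hdist
      have hmem : ∀ s ∈ Metric.ball s0 ε, Real.sin s ≠ 0 := by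
        intro s hs
        exact hball (by simpa [Real.dist_eq] using hs)
      -- cos is injective on the ball (sin of constant sign there ⇒ strictly monotone)
      have hinj : Set.InjOn Real.cos (Metric.ball s0 ε) := by
        have hconv : Convex ℝ (Metric.ball s0 ε) := convex_ball s0 ε
        have hint : interior (Metric.ball s0 ε) = Metric.ball s0 ε :=
          Metric.isOpen_ball.interior_eq
        have hs0mem : s0 ∈ Metric.ball s0 ε := Metric.mem_ball_self hε
        rcases lt_or_gt_of_ne (hmem s0 hs0mem) with hneg | hpos
        · -- sin s0 < 0; sin < 0 on the ball (by IVT / connectedness)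
          have hallneg : ∀ s ∈ Metric.ball s0 ε, Real.sin s < 0 := by
            intro s hs
            rcases lt_or_gt_of_ne (hmem s hs) with h | h
            · exact h
            · exfalso
              have hconn : IsPreconnected (Metric.ball s0 ε) := hconv.isPreconnected
              obtain ⟨x, hx, hx0⟩ := hconn.intermediate_value₂ hs0mem hs
                (Real.continuous_sin.continuousOn) continuousOn_const
                (le_of_lt hneg) (le_of_lt h)
              exact hmem x hx hx0
          have : StrictMonoOn Real.cos (Metric.ball s0 ε) := by
            apply strictMonoOn_of_deriv_pos hconv Real.continuous_cos.continuousOn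
            intro x hx
            rw [hint] at hx
            rw [Real.deriv_cos]
            linarith [hallneg x hx]
          exact this.injOn
        · have hallpos : ∀ s ∈ Metric.ball s0 ε, 0 < Real.sin s := by
            intro s hs
            rcases lt_or_gt_of_ne (hmem s hs) with h | h
            · exfalso
              have hconn : IsPreconnected (Metric.ball s0 ε) := hconv.isPreconnected
              obtain ⟨x, hx, hx0⟩ := hconn.intermediate_value₂ hs hs0mem
                (Real.continuous_sin.continuousOn) continuousOn_const
                (le_of_lt h) (le_of_lt hpos)
              exact hmem x hx hx0
            · exact h
          have : StrictAntiOn Real.cos (Metric.ball s0 ε) := by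
            apply strictAntiOn_of_deriv_neg hconv Real.continuous_cos.continuousOn
            intro x hx
            rw [hint] at hx
            rw [Real.deriv_cos]
            linarith [hallpos x hx]
          exact this.injOn
      have hcos_ne : Real.cos (θ' - μ) ≠ c := by
        intro hcc
        apply hne
        have hmem' : θ' - μ ∈ Metric.ball s0 ε := by
          rw [Metric.mem_ball, Real.dist_eq]
          have h : θ' - μ - s0 = θ' - θ := by rw [hs0]; ring
          rw [h]; exact hdist
        have := hinj hmem' (Metric.mem_ball_self hε) (by rw [hcc, ← hθ])
        linarith [sub_left_injective.eq_iff.mp this]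
      have := key θ hθ θ'
      rw [this]
      have hsq : 0 < (Real.cos (θ' - μ) - c) ^ 2 :=
        pow_two_pos_of_ne_zero (sub_ne_zero_of_ne hcos_ne)
      have hcoef : 0 < 4 * r1 * r2 / I := by positivity
      nlinarith
  · -- exactly two solutions in [μ, μ + 2π)
    set a := Real.arccos c with ha_def
    have ha_pos : 0 < a := Real.arccos_pos.mpr hc_lt1
    have ha_lt : a < π := by
      refine lt_of_le_of_ne (Real.arccos_le_pi c) fun h => ?_
      have := Real.arccos_eq_pi.mp h
      linarith
    have hcos_a : Real.cos a = c := Real.cos_arccos (le_of_lt hc_gt) (le_of_lt hc_lt1)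
    refine ⟨μ + a, μ + (2 * π - a), ?_, ?_, ?_, ?_, ?_, ?_⟩
    · intro h
      have : a = 2 * π - a := by linarith [add_left_cancel h]
      linarith
    · constructor <;> [linarith; linarith]
    · constructor <;> [linarith; linarith]
    · simpa using hcos_a
    · have : Real.cos (2 * π - a) = Real.cos a := by
        rw [show 2 * π - a = -a + 2 * π by ring, Real.cos_add_two_pi, Real.cos_neg]
      simpa [this] using hcos_a
    · intro θ hθmem hθ
      set t := θ - μ with ht_def
      have ht0 : 0 ≤ t := by have := hθmem.1; simp [ht_def]; linarith
      have ht2 : t < 2 * π := by have := hθmem.2; simp [ht_def]; linarith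
      rcases le_or_gt t π with hle | hgt
      · left
        have hta : t = a := Real.injOn_cos ⟨ht0, hle⟩ ⟨le_of_lt ha_pos, le_of_lt ha_lt⟩
          (by rw [hcos_a]; exact hθ)
        rw [ht_def] at hta
        linarith
      · right
        have h1 : Real.cos (2 * π - t) = c := by
          rw [show 2 * π - t = -t + 2 * π by ring, Real.cos_add_two_pi, Real.cos_neg]
          exact hθ
        have : 2 * π - t = a := by
          apply Real.injOn_cos ⟨by linarith, by linarith⟩
            ⟨le_of_lt ha_pos, le_of_lt ha_lt⟩
          rw [h1, hcos_a]
        have ht : t = 2 * π - a := by linarith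
        rw [ht_def] at ht
        linarith
end
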